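/- For every natural number n, there exist convex subsets x, y_1, …, y_{n+2} of ℝ^{n+1} such that ⋂_{i=1}^{n+2} convexHull(x ∪ y_i) is NOT contained in convexHull(x ∪ ⋃_{(I₁,I₂)} (convexHull(⋃_{i∈I₁} y_i) ∩ convexHull(⋃_{i∈I₂} y_i))), where the union ⋃_{(I₁,I₂)} is taken over all ordered pairs (I₁, I₂) of nonempty disjoint subsets of the index set {1, …, n+2} whose union is the whole index set. -/
import Mathlib


/-- The Radon-type identity (x.47) for parameter `n` fails in `Conv(ℝ^{n+1})`. -/
theorem conv_succ_not_radon_identity (n : ℕ) :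
    ∃ (x : Set (Fin (n + 1) → ℝ)) (y : Fin (n + 2) → Set (Fin (n + 1) → ℝ)),
      Convex ℝ x ∧ (∀ i, Convex ℝ (y i)) ∧
      ¬ ((⋂ i, convexHull ℝ (x ∪ y i)) ⊆
          convexHull ℝ (x ∪
            ⋃ (I : Set (Fin (n + 2)) × Set (Fin (n + 2)))
              (_ : I.1.Nonempty ∧ I.2.Nonempty ∧ Disjoint I.1 I.2 ∧ I.1 ∪ I.2 = Set.univ),
              (convexHull ℝ (⋃ i ∈ I.1, y i) ∩ convexHull ℝ (⋃ i ∈ I.2, y i)))) := by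
  classical
  set v : Fin (n + 2) → Fin (n + 1) → ℝ := fun i j => if (i : ℕ) = (j : ℕ) then 1 else 0 with hv
  set X : Set (Fin (n + 1) → ℝ) := Set.range fun i : Fin (n + 2) => (4 : ℝ) • v 0 - v i with hX
  refine ⟨convexHull ℝ X, fun i => {v i}, convex_convexHull ℝ X, fun i => convex_singleton _, ?_⟩
  intro hsub
  set p : Fin (n + 1) → ℝ := (2 : ℝ) • v 0 with hp
  -- p lies in each convexHull (x ∪ {v i})
  have hmem : p ∈ ⋂ i, convexHull ℝ (convexHull ℝ X ∪ {v i}) := by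
    refine Set.mem_iInter.2 fun i => ?_
    have h1 : (4 : ℝ) • v 0 - v i ∈ convexHull ℝ (convexHull ℝ X ∪ {v i}) :=
      subset_convexHull ℝ _ (Or.inl (subset_convexHull ℝ X ⟨i, rfl⟩))
    have h2 : v i ∈ convexHull ℝ (convexHull ℝ X ∪ {v i}) :=
      subset_convexHull ℝ _ (Or.inr rfl)
    have hc := (convex_convexHull ℝ (convexHull ℝ X ∪ {v i})) h1 h2
      (by norm_num : (0:ℝ) ≤ 1/2) (by norm_num : (0:ℝ) ≤ 1/2) (by norm_num)
    have hpe : p = (1/2 : ℝ) • ((4 : ℝ) • v 0 - v i) + (1/2 : ℝ) • v i := by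
      funext j
      simp only [hp, hv, Pi.smul_apply, Pi.add_apply, Pi.sub_apply, smul_eq_mul]
      ring
    rw [hpe]
    exact hc
  have hgot := hsub hmem
  -- every Radon piece is empty
  have hU : ∀ I : Set (Fin (n+2)) × Set (Fin (n+2)),
      (I.1.Nonempty ∧ I.2.Nonempty ∧ Disjoint I.1 I.2 ∧ I.1 ∪ I.2 = Set.univ) →
      convexHull ℝ (⋃ i ∈ I.1, ({v i} : Set (Fin (n+1) → ℝ))) ∩
        convexHull ℝ (⋃ i ∈ I.2, ({v i} : Set (Fin (n+1) → ℝ))) = ∅ := by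
    rintro ⟨I1, I2⟩ ⟨-, -, hd, hu⟩
    have key : ∀ I : Set (Fin (n+2)),
        convexHull ℝ (⋃ i ∈ I, ({v i} : Set (Fin (n+1) → ℝ))) ⊆
          {z | (∀ j : Fin (n+1), j.castSucc ∉ I → z j = 0) ∧
               (Fin.last (n+1) ∉ I → ∑ j, z j = 1)} := by
      intro I
      apply convexHull_min
      · rintro z hz
        simp only [Set.mem_iUnion, Set.mem_singleton_iff] at hz
        obtain ⟨i, hi, rfl⟩ := hz
        constructor
        · intro j hj
          have hne : (i : ℕ) ≠ (j : ℕ) := by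
            intro h
            apply hj
            have hij : i = j.castSucc := Fin.ext (by simpa using h)
            exact hij ▸ hi
          simp [hv, hne]
        · intro hl
          have hi' : (i : ℕ) < n + 1 := by
            rcases lt_or_eq_of_le (Nat.lt_succ_iff.mp i.isLt) with h | h
            · exact h
            · exact absurd (Fin.ext h : i = Fin.last (n+1)) (fun he => hl (he ▸ hi))
          have h0 : ∀ j : Fin (n+1), v i j = if j = (⟨(i:ℕ), hi'⟩ : Fin (n+1)) then 1 else 0 := by
            intro j
            simp only [hv]
            congr 1
            simp [Fin.ext_iff, eq_comm]
          simp [h0]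
      · intro z hz w hw a b ha hb hab
        constructor
        · intro j hj
          have h1 := hz.1 j hj
          have h2 := hw.1 j hj
          simp [h1, h2]
        · intro hl
          have h1 := hz.2 hl
          have h2 := hw.2 hl
          simp only [Pi.add_apply, Pi.smul_apply, smul_eq_mul]
          rw [Finset.sum_add_distrib, ← Finset.mul_sum, ← Finset.mul_sum, h1, h2]
          linarith
    ext z
    simp only [Set.mem_inter_iff, Set.mem_empty_iff_false, iff_false, not_and]
    intro hz1 hz2
    obtain ⟨hz10, hz11⟩ := key I1 hz1
    obtain ⟨hz20, hz21⟩ := key I2 hz2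
    have hz0 : ∀ j : Fin (n+1), z j = 0 := by
      intro j
      have hj : j.castSucc ∈ I1 ∪ I2 := hu ▸ Set.mem_univ _
      rcases hj with h | h
      · exact hz20 j (Set.disjoint_left.mp hd h)
      · exact hz10 j (Set.disjoint_right.mp hd h)
    have hsum0 : ∑ j, z j = 0 := by simp [hz0]
    have hlast : Fin.last (n+1) ∈ I1 ∪ I2 := hu ▸ Set.mem_univ _
    rcases hlast with h | h
    · have := hz21 (Set.disjoint_left.mp hd h)
      rw [hsum0] at this; norm_num at this
    · have := hz11 (Set.disjoint_right.mp hd h)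
      rw [hsum0] at this; norm_num at this
  -- the RHS is contained in the halfspace {z | 3 ≤ z 0}
  have hH : Convex ℝ {z : Fin (n + 1) → ℝ | 3 ≤ z 0} :=
    convex_halfSpace_ge ⟨fun a b => rfl, fun c a => rfl⟩ 3
  have hfin : p ∈ {z : Fin (n + 1) → ℝ | 3 ≤ z 0} := by
    refine convexHull_min ?_ hH hgot
    rintro z (hz | hz)
    · refine convexHull_min ?_ hH hz
      rintro w ⟨i, rfl⟩
      have he : ((4:ℝ) • v 0 - v i) 0 = 4 - (if (i:ℕ) = 0 then 1 else 0) := by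
        simp [hv]
      simp only [Set.mem_setOf_eq, he]
      split <;> norm_num
    · exfalso
      simp only [Set.mem_iUnion] at hz
      obtain ⟨I, hI, hzI⟩ := hz
      rw [hU I hI] at hzI
      exact hzI
  have h3 : (3:ℝ) ≤ p 0 := hfin
  simp only [hp, hv, Pi.smul_apply, smul_eq_mul] at h3
  norm_num at h3
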